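/- Let S be a commutative subsemigroup of a commutative group (G, +), let (w_n) be a sequence in S satisfying the uniqueness condition (*): each element of G can be written in at most one way as Σ_{i∈A} w_i − Σ_{j∈B} w_j with A, B disjoint finite subsets of ℕ. For (a, s) ∈ ℤ_+ × S and α ∈ ℕ, let U_{a,s,α} = { (a − k, s + Σ_{i=1}^k w_{m_i}) : 0 ≤ k ≤ a, α ≤ m_1 < ... < m_k }. Then the collection of all U_{a,s,α} forms a base for a topology on ℤ_+ × S. -/
import Mathlib


/-- The basic set `U_{a,s,α} = { (a − k, s + ∑_{i=1}^k w_{m_i}) : 0 ≤ k ≤ a, α ≤ m_1 < ⋯ < m_k }`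
inside `ℤ₊ × S`. -/
def Ubase {G : Type*} [AddCommGroup G] (S : AddSubsemigroup G) (w : ℕ → G)
    (a : ℕ) (s : G) (α : ℕ) : Set (ℕ × S) :=
  {p | ∃ t : Finset ℕ, t.card ≤ a ∧ (∀ m ∈ t, α ≤ m) ∧
    p.1 = a - t.card ∧ (p.2 : G) = s + ∑ m ∈ t, w m}

lemma Ubase_sub {G : Type*} [AddCommGroup G] (S : AddSubsemigroup G) (w : ℕ → G)
    {a : ℕ} {s : G} {α : ℕ} {p : ℕ × S} {T : Finset ℕ} {γ : ℕ}
    (hTa : T.card ≤ a) (hTα : ∀ m ∈ T, α ≤ m)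
    (hp1 : p.1 = a - T.card) (hp2 : (p.2 : G) = s + ∑ m ∈ T, w m)
    (hγα : α ≤ γ) (hγT : ∀ m ∈ T, m < γ) :
    Ubase S w p.1 (p.2 : G) γ ⊆ Ubase S w a s α := by
  rintro q ⟨R, hRc, hRγ, hq1, hq2⟩
  have hdisj : Disjoint T R := by
    rw [Finset.disjoint_left]
    intro m hmT hmR
    exact absurd (hγT m hmT) (not_lt.2 (hRγ m hmR))
  refine ⟨T ∪ R, ?_, ?_, ?_, ?_⟩
  · rw [Finset.card_union_of_disjoint hdisj]
    omega
  · intro m hm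
    rcases Finset.mem_union.1 hm with h | h
    · exact hTα m h
    · exact le_trans hγα (hRγ m h)
  · rw [Finset.card_union_of_disjoint hdisj, hq1, hp1]
    omega
  · rw [hq2, hp2, Finset.sum_union hdisj, add_assoc]

/-- Let `S` be a subsemigroup of a commutative group `G` and `(w_n)` a sequence in `S`
satisfying the uniqueness condition (*).  Then the collection of all sets `U_{a,s,α}` forms a
base for a topology on `ℤ₊ × S`. -/
theorem Ubase_isTopologicalBasis {G : Type*} [AddCommGroup G] (S : AddSubsemigroup G)
    (w : ℕ → G) (hw : ∀ n, w n ∈ S)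
    (huniq : ∀ A B A' B' : Finset ℕ, Disjoint A B → Disjoint A' B' →
      (∑ i ∈ A, w i) - (∑ j ∈ B, w j) = (∑ i ∈ A', w i) - (∑ j ∈ B', w j) →
      A = A' ∧ B = B') :
    @TopologicalSpace.IsTopologicalBasis (ℕ × S)
      (TopologicalSpace.generateFrom
        {V : Set (ℕ × S) | ∃ (a : ℕ) (s : S) (α : ℕ), V = Ubase S w a (s : G) α})
      {V : Set (ℕ × S) | ∃ (a : ℕ) (s : S) (α : ℕ), V = Ubase S w a (s : G) α} := by
  letI : TopologicalSpace (ℕ × S) :=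
    TopologicalSpace.generateFrom
      {V : Set (ℕ × S) | ∃ (a : ℕ) (s : S) (α : ℕ), V = Ubase S w a (s : G) α}
  refine ⟨?_, ?_, rfl⟩
  · rintro t₁ ⟨a, s, α, rfl⟩ t₂ ⟨b, t, β, rfl⟩ p ⟨⟨T, hTa, hTα, hp1, hp2⟩, ⟨T', hT'b, hT'β, hp1', hp2'⟩⟩
    set γ := max (max α β) ((T ∪ T').sup id + 1) with hγ
    refine ⟨Ubase S w p.1 (p.2 : G) γ, ⟨p.1, p.2, γ, rfl⟩, ⟨∅, by simp⟩, Set.subset_inter ?_ ?_⟩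
    · exact Ubase_sub S w hTa hTα hp1 hp2 (le_trans (le_max_left _ _) (le_max_left _ _))
        (fun m hm => lt_of_lt_of_le (Nat.lt_succ_of_le
          (Finset.le_sup (f := id) (Finset.mem_union_left _ hm))) (le_max_right _ _))
    · exact Ubase_sub S w hT'b hT'β hp1' hp2' (le_trans (le_max_right _ _) (le_max_left _ _))
        (fun m hm => lt_of_lt_of_le (Nat.lt_succ_of_le
          (Finset.le_sup (f := id) (Finset.mem_union_right _ hm))) (le_max_right _ _))
  · apply Set.eq_univ_of_forall
    intro p
    exact Set.mem_sUnion.2 ⟨Ubase S w p.1 (p.2 : G) 0, ⟨p.1, p.2, 0, rfl⟩, ⟨∅, by simp⟩⟩
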